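/- Algebraic identity for the auxiliary series w: with b ≠ c nonzero complex numbers, let f be the formal power series with f(0)=1 and f² = (1−bx)(1−cx), and set w(x) = (1 − ((b+c)/2)x − f(x))/(2x). Then w satisfies w(x) = x·(α + β·w(x) + w(x)²) with α = (b−c)²/16 and β = (b+c)/2. -/

import Mathlib

/-- Algebraic identity for the auxiliary series
`w = (1 − ((b+c)/2)x − √((1−bx)(1−cx)))/(2x)`: it satisfies
`w = x·(α + β·w + w²)` with `α = (b−c)²/16` and `β = (b+c)/2`. -/
theorem aux_series_identity (b c : ℂ) (hb : b ≠ 0) (hc : c ≠ 0) (hbc : b ≠ c)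
    (f w : PowerSeries ℂ)
    (hf0 : PowerSeries.coeff 0 f = 1)
    (hf : f ^ 2 = (1 - PowerSeries.C b * PowerSeries.X)
      * (1 - PowerSeries.C c * PowerSeries.X))
    (hw : PowerSeries.C 2 * PowerSeries.X * w
      = 1 - PowerSeries.C ((b + c) / 2) * PowerSeries.X - f) :
    w = PowerSeries.X * (PowerSeries.C ((b - c) ^ 2 / 16)
      + PowerSeries.C ((b + c) / 2) * w + w ^ 2) := by
  set C : ℂ →+* PowerSeries ℂ := PowerSeries.C
  set X : PowerSeries ℂ := PowerSeries.X
  have hC2 : C 2 = (2 : PowerSeries ℂ) := by simp [C, map_ofNat]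
  have hfeq : f = 1 - C ((b + c) / 2) * X - 2 * X * w := by
    rw [← hC2]; linear_combination hw
  have hsq : (1 - C ((b + c) / 2) * X - 2 * X * w) ^ 2
      = (1 - C b * X) * (1 - C c * X) := by rw [← hfeq]; exact hf
  have h2 : 2 * C ((b + c) / 2) = C b + C c := by
    rw [← hC2, ← map_mul, ← map_add]; congr 1; ring
  have h16 : 16 * C ((b - c) ^ 2 / 16) = (C b - C c) ^ 2 := by
    have : C 16 = (16 : PowerSeries ℂ) := by simp [C, map_ofNat]
    rw [← this, ← map_mul, ← map_sub, ← map_pow]; congr 1; ring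
  have hne : (16 : PowerSeries ℂ) * X ≠ 0 := by
    apply mul_ne_zero
    · intro h
      have := congrArg (PowerSeries.coeff 0) h
      simp [map_ofNat] at this
    · exact PowerSeries.X_ne_zero
  apply mul_left_cancel₀ hne
  linear_combination (-4 : PowerSeries ℂ) * hsq - X ^ 2 * h16
    + (-4 * X + X ^ 2 * (2 * C ((b + c) / 2) + C b + C c)) * h2
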